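/- (Conrad) Let < be a bi-order on a group G and let C < D be a convex jump. Then there exists a group homomorphism φ : D → (ℝ, +) such that ker φ = C and φ(g) > 0 for every g ∈ D with 1 < g and g ∉ C. -/

import Mathlib

/-- A bi-order on a group `G`: a strict linear order (irreflexive, transitive, total)
invariant under left and right multiplication. -/
structure IsBiOrder {G : Type*} [Group G] (r : G → G → Prop) : Prop where
  irrefl : ∀ x, ¬ r x x
  trans : ∀ x y z, r x y → r y z → r x z
  total : ∀ x y, x ≠ y → r x y ∨ r y x
  mul_left : ∀ x y z, r x y → r (z * x) (z * y)
  mul_right : ∀ x y z, r x y → r (x * z) (y * z)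

/-- The supremum of a set of reals, computed in the extended reals `[-∞, +∞]`
(so that `realSup ∅ = ⊥ = -∞`). -/
noncomputable def realSup (s : Set ℝ) : EReal :=
  sSup ((fun x : ℝ => (x : EReal)) '' s)

/-- A subgroup `C` is convex with respect to the order `r`: if `a ≤ g ≤ b`
with `a, b ∈ C`, then `g ∈ C`. -/
def IsConvexSubgroup {G : Type*} [Group G] (r : G → G → Prop) (C : Subgroup G) : Prop :=
  ∀ a b g : G, a ∈ C → b ∈ C → (r a g ∨ a = g) → (r g b ∨ g = b) → g ∈ C

/-- `C ⊊ D` is a convex jump: both are convex and no convex subgroup lies strictly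
between them. -/
def IsConvexJump {G : Type*} [Group G] (r : G → G → Prop) (C D : Subgroup G) : Prop :=
  IsConvexSubgroup r C ∧ IsConvexSubgroup r D ∧ C < D ∧
    ∀ E : Subgroup G, IsConvexSubgroup r E → C < E → ¬ E < D

section ConradAux

open Filter Topology

variable {G : Type*} [Group G] [LinearOrder G]
  [CovariantClass G G (· * ·) (· < ·)]
  [CovariantClass G G (Function.swap (· * ·)) (· < ·)]
  [CovariantClass G G (· * ·) (· ≤ ·)]
  [CovariantClass G G (Function.swap (· * ·)) (· ≤ ·)]

/-- Convexity of a subgroup with respect to the order `≤`. -/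
def ConradCvx (C : Subgroup G) : Prop :=
  ∀ a b g : G, a ∈ C → b ∈ C → a ≤ g → g ≤ b → g ∈ C

theorem conradCvx_comparable {H K : Subgroup G} (hH : ConradCvx H) (hK : ConradCvx K) :
    H ≤ K ∨ K ≤ H := by
  by_contra hcon
  push_neg at hcon
  obtain ⟨h1, h2⟩ := hcon
  obtain ⟨x, hxH, hxK⟩ := SetLike.not_le_iff_exists.1 h1
  obtain ⟨y, hyK, hyH⟩ := SetLike.not_le_iff_exists.1 h2
  set x' := max x x⁻¹ with hx'
  set y' := max y y⁻¹ with hy'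
  have hx'H : x' ∈ H := by
    rcases max_cases x x⁻¹ with ⟨h, _⟩ | ⟨h, _⟩ <;> rw [hx', h]
    · exact hxH
    · exact inv_mem hxH
  have hx'K : x' ∉ K := by
    rcases max_cases x x⁻¹ with ⟨h, _⟩ | ⟨h, _⟩ <;> rw [hx', h]
    · exact hxK
    · exact fun hc => hxK (by simpa using inv_mem hc)
  have hy'K : y' ∈ K := by
    rcases max_cases y y⁻¹ with ⟨h, _⟩ | ⟨h, _⟩ <;> rw [hy', h]
    · exact hyK
    · exact inv_mem hyK
  have hy'H : y' ∉ H := by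
    rcases max_cases y y⁻¹ with ⟨h, _⟩ | ⟨h, _⟩ <;> rw [hy', h]
    · exact hyH
    · exact fun hc => hyH (by simpa using inv_mem hc)
  have hx'1 : 1 ≤ x' := by
    rcases le_total 1 x with h | h
    · exact h.trans (le_max_left _ _)
    · exact (Left.one_le_inv_iff.2 h).trans (le_max_right _ _)
  have hy'1 : 1 ≤ y' := by
    rcases le_total 1 y with h | h
    · exact h.trans (le_max_left _ _)
    · exact (Left.one_le_inv_iff.2 h).trans (le_max_right _ _)
  rcases le_total x' y' with h | h
  · exact hx'K (hK 1 y' x' K.one_mem hy'K hx'1 h)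
  · exact hy'H (hH 1 x' y' H.one_mem hx'H hy'1 h)

theorem conrad_pow_le_pow {p : G} (hp : 1 ≤ p) {m n : ℕ} (h : m ≤ n) : p ^ m ≤ p ^ n :=
  pow_le_pow_right' hp h

theorem conrad_zpow_lt {z : G} (hz : 1 < z) {m n : ℤ} (h : m < n) : z ^ m < z ^ n := by
  have h1 : (1 : G) < z ^ (n - m) := by
    have ht : n - m = ((n - m).toNat : ℤ) := (Int.toNat_of_nonneg (by omega)).symm
    rw [ht, zpow_natCast]
    exact one_lt_pow' hz (by omega)
  calc z ^ m = z ^ m * 1 := (mul_one _).symm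
    _ < z ^ m * z ^ (n - m) := mul_lt_mul_right h1 _
    _ = z ^ n := by rw [← zpow_add]; congr 1; omega

theorem conrad_zpow_le_reflect {z : G} (hz : 1 < z) {m n : ℤ} (h : z ^ m ≤ z ^ n) : m ≤ n :=
  le_of_not_gt fun hlt => (conrad_zpow_lt hz hlt).not_ge h

theorem conrad_zpow_le_mono {z : G} (hz : 1 < z) {m n : ℤ} (h : m ≤ n) : z ^ m ≤ z ^ n := by
  rcases eq_or_lt_of_le h with rfl | h
  · exact le_rfl
  · exact (conrad_zpow_lt hz h).le

theorem conrad_zpow_lt_reflect {z : G} (hz : 1 < z) {m n : ℤ} (h : z ^ m < z ^ n) : m < n :=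
  lt_of_not_ge fun hle => (conrad_zpow_le_mono hz hle).not_gt h

set_option maxHeartbeats 2000000 in
theorem conrad_aux {G : Type*} [Group G] [LinearOrder G]
    [CovariantClass G G (· * ·) (· < ·)]
    [CovariantClass G G (Function.swap (· * ·)) (· < ·)]
    [CovariantClass G G (· * ·) (· ≤ ·)]
    [CovariantClass G G (Function.swap (· * ·)) (· ≤ ·)]
    (C D : Subgroup G) (hC : ConradCvx C) (hD : ConradCvx D) (hlt : C < D)
    (hjump : ∀ E : Subgroup G, ConradCvx E → C < E → ¬ E < D) :
    ∃ φ : D → ℝ, (∀ x y : D, φ (x * y) = φ x + φ y) ∧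
      (∀ x : D, φ x = 0 ↔ (x : G) ∈ C) ∧
      (∀ x : D, 1 < (x : G) → (x : G) ∉ C → 0 < φ x) := by
  classical
  -- bounds on elements of C by any positive element not in C
  have hCbnd : ∀ p : G, 1 < p → p ∉ C → ∀ c ∈ C, c < p ∧ p⁻¹ < c := by
    intro p hp1 hpC c hc
    constructor
    · by_contra hle
      push_neg at hle
      exact hpC (hC 1 c p C.one_mem hc hp1.le hle)
    · by_contra hle
      push_neg at hle
      have : p⁻¹ ∈ C := hC c 1 p⁻¹ hc C.one_mem hle (by simpa using hp1.le)
      exact hpC (by simpa using inv_mem this)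
  -- the archimedean property coming from the jump
  have arch : ∀ p : G, p ∈ D → 1 < p → p ∉ C → ∀ g ∈ D, ∃ n : ℕ, (p ^ n)⁻¹ ≤ g ∧ g ≤ p ^ n := by
    intro p hpD hp1 hpC
    let E : Subgroup G :=
    { carrier := {g : G | ∃ n : ℕ, (p ^ n)⁻¹ ≤ g ∧ g ≤ p ^ n}
      one_mem' := ⟨0, by simp⟩
      mul_mem' := by
        rintro a b ⟨n, hn1, hn2⟩ ⟨m, hm1, hm2⟩
        refine ⟨n + m, ?_, ?_⟩
        · have e : (p ^ (n + m))⁻¹ = (p ^ n)⁻¹ * (p ^ m)⁻¹ := by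
            rw [← mul_inv_rev, ← pow_add, add_comm]
          rw [e]
          exact mul_le_mul' hn1 hm1
        · rw [pow_add]
          exact mul_le_mul' hn2 hm2
      inv_mem' := by
        rintro a ⟨n, hn1, hn2⟩
        refine ⟨n, inv_le_inv_iff.2 hn2, ?_⟩
        have := inv_le_inv_iff.2 hn1
        rwa [inv_inv] at this }
    have hEcvx : ConradCvx E := by
      rintro a b g ⟨n, hn1, _⟩ ⟨m, _, hm2⟩ hag hgb
      refine ⟨max n m, ?_, ?_⟩
      · exact le_trans (le_trans (inv_le_inv_iff.2 (conrad_pow_le_pow hp1.le (le_max_left n m))) hn1) hag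
      · exact le_trans hgb (le_trans hm2 (conrad_pow_le_pow hp1.le (le_max_right n m)))
    have hCE : C < E := by
      constructor
      · intro c hc
        obtain ⟨h1, h2⟩ := hCbnd p hp1 hpC c hc
        exact ⟨1, by simpa using h2.le, by simpa using h1.le⟩
      · intro hEC
        refine hpC (hEC ⟨1, ?_, by simp⟩)
        rw [pow_one]
        exact (Left.inv_le_one_iff.2 hp1.le).trans hp1.le
    have hED : E ≤ D := by
      rintro g ⟨n, hn1, hn2⟩
      exact hD ((p ^ n)⁻¹) (p ^ n) g (inv_mem (pow_mem hpD n)) (pow_mem hpD n) hn1 hn2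
    have : E = D := le_antisymm hED (by
      by_contra hcon
      exact hjump E hEcvx hCE (lt_of_le_of_ne hED (fun h => hcon (le_of_eq h.symm))))
    intro g hg
    have : g ∈ E := this ▸ hg
    exact this
  -- pick a positive element of D not in C
  obtain ⟨z0, hz0D, hz0C⟩ := SetLike.exists_of_lt hlt
  have hz0ne : z0 ≠ 1 := fun h => hz0C (h ▸ C.one_mem)
  obtain ⟨z, hzD, hzC, hz1⟩ : ∃ z : G, z ∈ D ∧ z ∉ C ∧ 1 < z := by
    rcases lt_or_gt_of_ne hz0ne with h | h
    · exact ⟨z0⁻¹, inv_mem hz0D, fun hc => hz0C (by simpa using inv_mem hc),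
        Left.one_lt_inv_iff.2 h⟩
    · exact ⟨z0, hz0D, hz0C, h⟩
  -- C is normal in D
  have hconj : ∀ d : G, d ∈ D → ∀ c ∈ C, d * c * d⁻¹ ∈ C := by
    intro d hdD
    let C' : Subgroup G :=
    { carrier := {g : G | d⁻¹ * g * d ∈ C}
      one_mem' := by simpa using C.one_mem
      mul_mem' := by
        intro a b ha hb
        have h1 : (d⁻¹ * a * d) * (d⁻¹ * b * d) ∈ C := mul_mem ha hb
        have he : d⁻¹ * (a * b) * d = (d⁻¹ * a * d) * (d⁻¹ * b * d) := by group
        show d⁻¹ * (a * b) * d ∈ C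
        rw [he]
        exact h1
      inv_mem' := by
        intro a ha
        have h1 : (d⁻¹ * a * d)⁻¹ ∈ C := inv_mem ha
        have he : d⁻¹ * a⁻¹ * d = (d⁻¹ * a * d)⁻¹ := by group
        show d⁻¹ * a⁻¹ * d ∈ C
        rw [he]
        exact h1 }
    have hC'cvx : ConradCvx C' := by
      intro a b g ha hb hag hgb
      refine hC (d⁻¹ * a * d) (d⁻¹ * b * d) (d⁻¹ * g * d) ha hb ?_ ?_
      · exact mul_le_mul_left (mul_le_mul_right hag d⁻¹) d
      · exact mul_le_mul_left (mul_le_mul_right hgb d⁻¹) d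
    have hC'D : C' ≤ D := by
      intro g hg
      have h1 : d⁻¹ * g * d ∈ D := hlt.le hg
      have h2 : d * (d⁻¹ * g * d) * d⁻¹ ∈ D := mul_mem (mul_mem hdD h1) (inv_mem hdD)
      have he : g = d * (d⁻¹ * g * d) * d⁻¹ := by group
      rw [he]
      exact h2
    have hC'C : C' ≤ C := by
      by_contra hnot
      have hcmp := conradCvx_comparable hC'cvx hC
      rcases hcmp with h | h
      · exact hnot h
      · have hCltC' : C < C' := lt_of_le_of_ne h (fun he => hnot (le_of_eq he.symm))
        have : ¬ C' < D := hjump C' hC'cvx hCltC'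
        have hC'eqD : C' = D := le_antisymm hC'D (by
          by_contra hc
          exact this (lt_of_le_of_ne hC'D (fun hh => hc (le_of_eq hh.symm))))
        have hmem : d * z0 * d⁻¹ ∈ D := mul_mem (mul_mem hdD hz0D) (inv_mem hdD)
        have : d * z0 * d⁻¹ ∈ C' := hC'eqD ▸ hmem
        have hz0cc : d⁻¹ * (d * z0 * d⁻¹) * d ∈ C := this
        apply hz0C
        have he : z0 = d⁻¹ * (d * z0 * d⁻¹) * d := by group
        rw [he]
        exact hz0cc
    intro c hc
    have : d * c * d⁻¹ ∈ C' := by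
      show d⁻¹ * (d * c * d⁻¹) * d ∈ C
      have he : d⁻¹ * (d * c * d⁻¹) * d = c := by group
      rw [he]
      exact hc
    exact hC'C this
  -- congruence machinery mod C
  have ceq : ∀ p q : G, p = q → p⁻¹ * q ∈ C := by
    intro p q h
    rw [h, inv_mul_cancel]
    exact C.one_mem
  have ctrans : ∀ p q s : G, p⁻¹ * q ∈ C → q⁻¹ * s ∈ C → p⁻¹ * s ∈ C := by
    intro p q s h1 h2
    have h3 := mul_mem h1 h2
    have he : p⁻¹ * s = (p⁻¹ * q) * (q⁻¹ * s) := by group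
    rw [he]
    exact h3
  have congmul : ∀ x y u v : G, u ∈ D → x⁻¹ * y ∈ C → u⁻¹ * v ∈ C →
      (x * u)⁻¹ * (y * v) ∈ C := by
    intro x y u v huD hxy huv
    have h1 : u⁻¹ * (x⁻¹ * y) * (u⁻¹)⁻¹ ∈ C := hconj u⁻¹ (inv_mem huD) _ hxy
    have h2 := mul_mem h1 huv
    have he : (x * u)⁻¹ * (y * v) = (u⁻¹ * (x⁻¹ * y) * (u⁻¹)⁻¹) * (u⁻¹ * v) := by group
    rw [he]
    exact h2
  -- greatest power function (for a positive element not in C)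
  have hgr : ∀ ε : G, ε ∈ D → 1 < ε → ε ∉ C → ∀ g ∈ D,
      ∃ m : ℤ, ε ^ m ≤ g ∧ g < ε ^ (m + 1) := by
    intro ε hεD hε1 hεC g hgD
    obtain ⟨n, hn1, hn2⟩ := arch ε hεD hε1 hεC g hgD
    have hne : ∃ m : ℤ, ε ^ m ≤ g := ⟨-(n : ℤ), by rw [zpow_neg, zpow_natCast]; exact hn1⟩
    have hbd : ∃ b : ℤ, ∀ m : ℤ, ε ^ m ≤ g → m ≤ b := by
      refine ⟨(n : ℤ), fun m hm => conrad_zpow_le_reflect hε1 ?_⟩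
      rw [zpow_natCast]
      exact hm.trans hn2
    obtain ⟨b, hb⟩ := hbd
    obtain ⟨m, hm, hmax⟩ := Int.exists_greatest_of_bdd ⟨b, hb⟩ hne
    refine ⟨m, hm, lt_of_not_ge fun hle => ?_⟩
    have := hmax _ hle
    linarith
  -- key step: commutators lie in C
  have key : ∀ a b : G, a ∈ D → b ∈ D → 1 < (a * b)⁻¹ * (b * a) →
      (a * b)⁻¹ * (b * a) ∉ C → False := by
    intro a b haD hbD hc1 hcC
    set c := (a * b)⁻¹ * (b * a) with hcdef
    have hcD : c ∈ D := mul_mem (inv_mem (mul_mem haD hbD)) (mul_mem hbD haD)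
    have stepA : ∀ ε : G, ε ∈ D → 1 < ε → ε ∉ C → c < ε * ε := by
      intro ε hεD hε1 hεC
      obtain ⟨m, hm1, hm2⟩ := hgr ε hεD hε1 hεC a haD
      obtain ⟨k, hk1, hk2⟩ := hgr ε hεD hε1 hεC b hbD
      have h1 : ε ^ (m + k) ≤ a * b := by
        calc ε ^ (m + k) = ε ^ m * ε ^ k := zpow_add ε m k
          _ ≤ a * b := mul_le_mul' hm1 hk1
      have h2 : b * a < ε ^ (m + k + 2) := by
        calc b * a < ε ^ (k + 1) * a := mul_lt_mul_left hk2 a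
          _ < ε ^ (k + 1) * ε ^ (m + 1) := mul_lt_mul_right hm2 _
          _ = ε ^ (m + k + 2) := by rw [← zpow_add]; congr 1; omega
      calc c = (a * b)⁻¹ * (b * a) := hcdef
        _ < (a * b)⁻¹ * ε ^ (m + k + 2) := mul_lt_mul_right h2 _
        _ ≤ ε ^ (-(m + k)) * ε ^ (m + k + 2) := by
            refine mul_le_mul_left ?_ _
            rw [zpow_neg]
            exact inv_le_inv_iff.2 h1
        _ = ε ^ (2 : ℤ) := by rw [← zpow_add]; congr 1; omega
        _ = ε * ε := by rw [show (2 : ℤ) = 1 + 1 from rfl, zpow_add, zpow_one]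
    by_cases hsplit : ∃ u : G, u ∈ D ∧ 1 < u ∧ u ∉ C ∧ u < c ∧ u⁻¹ * c ∉ C
    · obtain ⟨u, huD, hu1, huC, huc, hucC⟩ := hsplit
      have huc1 : 1 < u⁻¹ * c := by
        have := mul_lt_mul_right huc u⁻¹
        rwa [inv_mul_cancel] at this
      set η := min u (u⁻¹ * c) with hη
      have hη1 : 1 < η := lt_min hu1 huc1
      have hucD : u⁻¹ * c ∈ D := mul_mem (inv_mem huD) hcD
      have hηD : η ∈ D := by
        rcases min_cases u (u⁻¹ * c) with ⟨h, _⟩ | ⟨h, _⟩ <;> rw [hη, h]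
        · exact huD
        · exact hucD
      have hηC : η ∉ C := by
        rcases min_cases u (u⁻¹ * c) with ⟨h, _⟩ | ⟨h, _⟩ <;> rw [hη, h]
        · exact huC
        · exact hucC
      have hηsq : η * η ≤ c := by
        rcases min_cases u (u⁻¹ * c) with ⟨h, h'⟩ | ⟨h, h'⟩ <;> rw [hη, h]
        · calc u * u ≤ u * (u⁻¹ * c) := mul_le_mul_right h' u
            _ = c := by group
        · calc (u⁻¹ * c) * (u⁻¹ * c) ≤ u * (u⁻¹ * c) := mul_le_mul_left h'.le _
            _ = c := by group
      exact absurd (stepA η hηD hη1 hηC) (not_lt.2 hηsq)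
    · push_neg at hsplit
      have hrep : ∀ g : G, g ∈ D → ∃ j : ℤ, (c ^ j)⁻¹ * g ∈ C := by
        intro g hgD
        obtain ⟨j, hj1, hj2⟩ := hgr c hcD hc1 hcC g hgD
        set h := (c ^ j)⁻¹ * g with hhdef
        have hh1 : 1 ≤ h := by
          have := mul_le_mul_right hj1 ((c ^ j)⁻¹)
          rwa [inv_mul_cancel] at this
        have hhc : h < c := by
          have h5 := mul_lt_mul_right hj2 ((c ^ j)⁻¹)
          have he : (c ^ j)⁻¹ * c ^ (j + 1) = c := by
            rw [← zpow_neg, ← zpow_add, show -j + (j + 1) = 1 by omega, zpow_one]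
          rw [hhdef]
          exact lt_of_lt_of_le h5 he.le
        have hhD : h ∈ D := mul_mem (inv_mem (zpow_mem hcD j)) hgD
        by_cases hhC : h ∈ C
        · exact ⟨j, hhC⟩
        · have hne1 : 1 < h := lt_of_le_of_ne hh1 (fun e => hhC (e ▸ C.one_mem))
          have hmem := hsplit h hhD hne1 hhC hhc
          refine ⟨j + 1, ?_⟩
          have : (h⁻¹ * c)⁻¹ ∈ C := inv_mem hmem
          have he : (c ^ (j + 1))⁻¹ * g = (h⁻¹ * c)⁻¹ := by
            rw [hhdef]
            rw [zpow_add, zpow_one]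
            group
          rw [he]
          exact this
      obtain ⟨i, hi⟩ := hrep a haD
      obtain ⟨j, hj⟩ := hrep b hbD
      have h1 : (c ^ i * c ^ j)⁻¹ * (a * b) ∈ C := congmul _ _ _ _ (zpow_mem hcD j) hi hj
      have h2 : (c ^ j * c ^ i)⁻¹ * (b * a) ∈ C := congmul _ _ _ _ (zpow_mem hcD i) hj hi
      have h1' : (c ^ (i + j))⁻¹ * (a * b) ∈ C := by rw [zpow_add]; exact h1
      have h2' : (c ^ (i + j))⁻¹ * (b * a) ∈ C := by
        rw [show i + j = j + i by omega, zpow_add]; exact h2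
      have h3 : (a * b)⁻¹ * (b * a) ∈ C := by
        have h4 := mul_mem (inv_mem h1') h2'
        have he : (a * b)⁻¹ * (b * a)
            = ((c ^ (i + j))⁻¹ * (a * b))⁻¹ * ((c ^ (i + j))⁻¹ * (b * a)) := by group
        rw [he]
        exact h4
      exact hcC h3
  have hcomm : ∀ a b : G, a ∈ D → b ∈ D → (a * b)⁻¹ * (b * a) ∈ C := by
    intro a b haD hbD
    by_contra hcC
    rcases lt_trichotomy 1 ((a * b)⁻¹ * (b * a)) with h1 | h1 | h1
    · exact key a b haD hbD h1 hcC
    · exact hcC (by rw [← h1]; exact C.one_mem)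
    · refine key b a hbD haD ?_ ?_
      · have he : ((a * b)⁻¹ * (b * a))⁻¹ = (b * a)⁻¹ * (a * b) := by group
        rw [← he]
        exact Left.one_lt_inv_iff.2 h1
      · intro hmem
        apply hcC
        have h4 := inv_mem hmem
        have he : (a * b)⁻¹ * (b * a) = ((b * a)⁻¹ * (a * b))⁻¹ := by group
        rw [he]
        exact h4
  -- powers of a product mod C
  have hpowcong : ∀ x y : G, x ∈ D → y ∈ D → ∀ n : ℕ,
      ((x * y) ^ n)⁻¹ * (x ^ n * y ^ n) ∈ C := by
    intro x y hx hy n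
    induction n with
    | zero => simpa using C.one_mem
    | succ n ih =>
      have s1 : ((x * y) ^ (n + 1))⁻¹ * ((x ^ n * y ^ n) * (x * y)) ∈ C := by
        have := congmul _ _ _ _ (mul_mem hx hy) ih (ceq (x * y) (x * y) rfl)
        rw [pow_succ]
        exact this
      have s2 : (y ^ n * x)⁻¹ * (x * y ^ n) ∈ C := hcomm (y ^ n) x (pow_mem hy n) hx
      have s3 : (x ^ n * (y ^ n * x))⁻¹ * (x ^ n * (x * y ^ n)) ∈ C :=
        congmul _ _ _ _ (mul_mem (pow_mem hy n) hx) (ceq _ _ rfl) s2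
      have s4 : ((x ^ n * (y ^ n * x)) * y)⁻¹ * ((x ^ n * (x * y ^ n)) * y) ∈ C :=
        congmul _ _ _ _ hy s3 (ceq _ _ rfl)
      have e1 : (x ^ n * y ^ n) * (x * y) = (x ^ n * (y ^ n * x)) * y := by group
      have e2 : (x ^ n * (x * y ^ n)) * y = x ^ (n + 1) * y ^ (n + 1) := by
        rw [pow_succ, pow_succ]
        group
      refine ctrans _ ((x ^ n * y ^ n) * (x * y)) _ s1 ?_
      rw [e1]
      refine ctrans _ ((x ^ n * (x * y ^ n)) * y) _ s4 ?_
      exact ceq _ _ e2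
  -- the greatest-exponent function K
  have hKex : ∀ g : G, g ∈ D → ∀ n : ℕ,
      ∃ m : ℤ, z ^ m ≤ g ^ n ∧ ∀ m' : ℤ, z ^ m' ≤ g ^ n → m' ≤ m := by
    intro g hg n
    obtain ⟨N, hN1, hN2⟩ := arch z hzD hz1 hzC (g ^ n) (pow_mem hg n)
    have hne : ∃ m : ℤ, z ^ m ≤ g ^ n := ⟨-(N : ℤ), by rw [zpow_neg, zpow_natCast]; exact hN1⟩
    have hbd : ∃ b : ℤ, ∀ m : ℤ, z ^ m ≤ g ^ n → m ≤ b := by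
      refine ⟨(N : ℤ), fun m hm => conrad_zpow_le_reflect hz1 ?_⟩
      rw [zpow_natCast]
      exact hm.trans hN2
    exact Int.exists_greatest_of_bdd hbd hne
  let K : D → ℕ → ℤ := fun g n => (hKex (g : G) g.2 n).choose
  have hKle : ∀ (g : D) (n : ℕ), z ^ K g n ≤ (g : G) ^ n :=
    fun g n => (hKex (g : G) g.2 n).choose_spec.1
  have hKmax : ∀ (g : D) (n : ℕ) (m' : ℤ), z ^ m' ≤ (g : G) ^ n → m' ≤ K g n :=
    fun g n => (hKex (g : G) g.2 n).choose_spec.2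
  have hKlt : ∀ (g : D) (n : ℕ), (g : G) ^ n < z ^ (K g n + 1) := by
    intro g n
    by_contra hle
    push_neg at hle
    have := hKmax g n _ hle
    linarith
  have hKsup : ∀ (g : D) (n m : ℕ), K g n + K g m ≤ K g (n + m) := by
    intro g n m
    refine hKmax g (n + m) _ ?_
    calc z ^ (K g n + K g m) = z ^ K g n * z ^ K g m := zpow_add z _ _
      _ ≤ (g : G) ^ n * (g : G) ^ m := mul_le_mul' (hKle g n) (hKle g m)
      _ = (g : G) ^ (n + m) := (pow_add _ _ _).symm
  have hKsub : ∀ (g : D) (n m : ℕ), K g (n + m) ≤ K g n + K g m + 1 := by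
    intro g n m
    have h1 : z ^ (K g (n + m)) < z ^ (K g n + 1 + (K g m + 1)) := by
      calc z ^ (K g (n + m)) ≤ (g : G) ^ (n + m) := hKle g (n + m)
        _ = (g : G) ^ n * (g : G) ^ m := pow_add _ _ _
        _ < z ^ (K g n + 1) * (g : G) ^ m := mul_lt_mul_left (hKlt g n) _
        _ < z ^ (K g n + 1) * z ^ (K g m + 1) := mul_lt_mul_right (hKlt g m) _
        _ = z ^ (K g n + 1 + (K g m + 1)) := (zpow_add z _ _).symm
    have := conrad_zpow_lt_reflect hz1 h1
    linarith
  -- the function φ via Fekete's lemma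
  have hKzero : ∀ g : D, K g 0 = 0 := by
    intro g
    have h1 : (0 : ℤ) ≤ K g 0 := hKmax g 0 0 (by simp)
    have h2 : z ^ (K g 0) ≤ z ^ (0 : ℤ) := by
      rw [zpow_zero]
      simpa using hKle g 0
    have := conrad_zpow_le_reflect hz1 h2
    exact le_antisymm this h1
  have hKlin : ∀ (g : D) (n : ℕ), (n : ℤ) * K g 1 ≤ K g n := by
    intro g n
    induction n with
    | zero => simp [hKzero g]
    | succ n ih =>
      have := hKsup g n 1
      push_cast
      have : K g n + K g 1 ≤ K g (n + 1) := hKsup g n 1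
      nlinarith [this, ih]
  have hsubadd : ∀ g : D, Subadditive (fun n : ℕ => ((K g n : ℝ) + 1)) := by
    intro g m n
    show ((K g (m + n) : ℝ) + 1) ≤ ((K g m : ℝ) + 1) + ((K g n : ℝ) + 1)
    have hcast : ((K g (m + n) : ℝ)) ≤ (K g m : ℝ) + (K g n : ℝ) + 1 := by
      exact_mod_cast hKsub g m n
    linarith
  have hbdd : ∀ g : D, BddBelow (Set.range fun n : ℕ => ((K g n : ℝ) + 1) / n) := by
    intro g
    refine ⟨min ((K g 1 : ℝ)) 0, ?_⟩
    rintro x ⟨n, rfl⟩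
    rcases Nat.eq_zero_or_pos n with rfl | hn
    · simp
    · have hnR : (0 : ℝ) < n := by exact_mod_cast hn
      have h1 : ((n : ℝ) * (K g 1 : ℝ)) ≤ (K g n : ℝ) := by exact_mod_cast hKlin g n
      have : (K g 1 : ℝ) ≤ ((K g n : ℝ) + 1) / n := by
        rw [le_div_iff₀ hnR]
        nlinarith
      exact le_trans (min_le_left _ _) this
  let φ : D → ℝ := fun g => (hsubadd g).lim
  have hT : ∀ g : D, Tendsto (fun n : ℕ => ((K g n : ℝ) + 1) / n) atTop (𝓝 (φ g)) :=
    fun g => (hsubadd g).tendsto_lim (hbdd g)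
  have hT' : ∀ g : D, Tendsto (fun n : ℕ => (K g n : ℝ) / n) atTop (𝓝 (φ g)) := by
    intro g
    have h0 : Tendsto (fun n : ℕ => (1 : ℝ) / n) atTop (𝓝 0) :=
      tendsto_one_div_atTop_nhds_zero_nat
    have := (hT g).sub h0
    rw [sub_zero] at this
    refine this.congr fun n => ?_
    rw [← sub_div, add_sub_cancel_right]
  -- additivity estimate
  have hKadd : ∀ x y : D, ∀ n : ℕ,
      K x n + K y n - 1 ≤ K (x * y) n ∧ K (x * y) n ≤ K x n + K y n + 2 := by
    intro x y n
    have hxyG : ((x * y : D) : G) = (x : G) * (y : G) := rfl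
    have hw : (((x : G) * (y : G)) ^ n)⁻¹ * ((x : G) ^ n * (y : G) ^ n) ∈ C :=
      hpowcong _ _ x.2 y.2 n
    set w := (((x : G) * (y : G)) ^ n)⁻¹ * ((x : G) ^ n * (y : G) ^ n) with hwdef
    have hwb := hCbnd z hz1 hzC w hw
    have hwb' := hCbnd z hz1 hzC w⁻¹ (inv_mem hw)
    have heq : ((x : G) * (y : G)) ^ n * w = (x : G) ^ n * (y : G) ^ n := by
      rw [hwdef]; group
    constructor
    · refine hKmax (x * y) n _ ?_
      rw [hxyG]
      have h1 : z ^ (K x n + K y n) ≤ ((x : G) * (y : G)) ^ n * w := by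
        rw [heq, zpow_add]
        exact mul_le_mul' (hKle x n) (hKle y n)
      have h2 : ((x : G) * (y : G)) ^ n * w < ((x : G) * (y : G)) ^ n * z :=
        mul_lt_mul_right hwb.1 _
      have h3 : z ^ (K x n + K y n) * z⁻¹ ≤ ((x : G) * (y : G)) ^ n := by
        have h4 := (h1.trans_lt h2).le
        have := mul_le_mul_left h4 z⁻¹
        rwa [mul_inv_cancel_right] at this
      calc z ^ (K x n + K y n - 1) = z ^ (K x n + K y n) * z⁻¹ := by
            rw [← zpow_neg_one, ← zpow_add, sub_eq_add_neg]
        _ ≤ ((x : G) * (y : G)) ^ n := h3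
    · have heq2 : ((x : G) * (y : G)) ^ n = (x : G) ^ n * (y : G) ^ n * w⁻¹ := by
        rw [hwdef]; group
      have h5 : ((x : G) * (y : G)) ^ n < z ^ (K x n + K y n + 3) := by
        rw [heq2]
        calc (x : G) ^ n * (y : G) ^ n * w⁻¹ < (x : G) ^ n * (y : G) ^ n * z :=
              mul_lt_mul_right hwb'.1 _
          _ < z ^ (K x n + 1) * (y : G) ^ n * z := by
              refine mul_lt_mul_left (mul_lt_mul_left (hKlt x n) _) z
          _ < z ^ (K x n + 1) * z ^ (K y n + 1) * z := by
              refine mul_lt_mul_left (mul_lt_mul_right (hKlt y n) _) z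
          _ = z ^ (K x n + K y n + 3) := by
              have e1 : z ^ (K x n + 1 + (K y n + 1) + (1 : ℤ))
                  = z ^ (K x n + 1) * z ^ (K y n + 1) * z ^ (1 : ℤ) := by
                rw [zpow_add, zpow_add]
              rw [show (K x n + K y n + 3 : ℤ) = K x n + 1 + (K y n + 1) + 1 by ring, e1,
                zpow_one]
      have h6 : z ^ (K (x * y) n) < z ^ (K x n + K y n + 3) := by
        refine lt_of_le_of_lt ?_ h5
        have := hKle (x * y) n
        rwa [hxyG] at this
      have := conrad_zpow_lt_reflect hz1 h6
      linarith
  have hφadd : ∀ x y : D, φ (x * y) = φ x + φ y := by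
    intro x y
    have l1 : Tendsto (fun n : ℕ => (K x n : ℝ) / n + (K y n : ℝ) / n) atTop
        (𝓝 (φ x + φ y)) := (hT' x).add (hT' y)
    have h0 : Tendsto (fun n : ℕ => (1 : ℝ) / n) atTop (𝓝 0) :=
      tendsto_one_div_atTop_nhds_zero_nat
    have llow : Tendsto (fun n : ℕ => (K x n : ℝ) / n + (K y n : ℝ) / n - 1 / n) atTop
        (𝓝 (φ x + φ y)) := by
      have := l1.sub h0
      rwa [sub_zero] at this
    have lhigh : Tendsto (fun n : ℕ => (K x n : ℝ) / n + (K y n : ℝ) / n + 2 * (1 / n)) atTop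
        (𝓝 (φ x + φ y)) := by
      have := l1.add (h0.const_mul 2)
      rwa [mul_zero, add_zero] at this
    have l2 : Tendsto (fun n : ℕ => (K (x * y) n : ℝ) / n) atTop (𝓝 (φ x + φ y)) := by
      refine tendsto_of_tendsto_of_tendsto_of_le_of_le' llow lhigh ?_ ?_
      · filter_upwards [eventually_ge_atTop 1] with n hn
        have hnR : (0 : ℝ) < n := by exact_mod_cast hn
        have h1 := (hKadd x y n).1
        have h1R : (K x n : ℝ) + (K y n : ℝ) - 1 ≤ (K (x * y) n : ℝ) := by exact_mod_cast h1
        calc (K x n : ℝ) / n + (K y n : ℝ) / n - 1 / n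
            = ((K x n : ℝ) + (K y n : ℝ) - 1) / n := by ring
          _ ≤ (K (x * y) n : ℝ) / n := (div_le_div_iff_of_pos_right hnR).2 h1R
      · filter_upwards [eventually_ge_atTop 1] with n hn
        have hnR : (0 : ℝ) < n := by exact_mod_cast hn
        have h1 := (hKadd x y n).2
        have h1R : (K (x * y) n : ℝ) ≤ (K x n : ℝ) + (K y n : ℝ) + 2 := by exact_mod_cast h1
        calc (K (x * y) n : ℝ) / n ≤ ((K x n : ℝ) + (K y n : ℝ) + 2) / n :=
              (div_le_div_iff_of_pos_right hnR).2 h1R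
          _ = (K x n : ℝ) / n + (K y n : ℝ) / n + 2 * (1 / n) := by ring
    exact tendsto_nhds_unique (hT' (x * y)) l2
  -- φ vanishes on C
  have hφC : ∀ x : D, (x : G) ∈ C → φ x = 0 := by
    intro x hx
    have hb : ∀ n : ℕ, -1 ≤ K x n ∧ K x n ≤ 0 := by
      intro n
      have hxn : (x : G) ^ n ∈ C := pow_mem hx n
      have hbnd := hCbnd z hz1 hzC ((x : G) ^ n) hxn
      constructor
      · refine hKmax x n (-1) ?_
        rw [zpow_neg_one]
        exact hbnd.2.le
      · have h1 : z ^ K x n < z ^ (1 : ℤ) := by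
          rw [zpow_one]
          exact (hKle x n).trans_lt hbnd.1
        have := conrad_zpow_lt_reflect hz1 h1
        linarith
    have h0 : Tendsto (fun n : ℕ => (1 : ℝ) / n) atTop (𝓝 0) :=
      tendsto_one_div_atTop_nhds_zero_nat
    have hneg : Tendsto (fun n : ℕ => -(1 / (n : ℝ))) atTop (𝓝 0) := by
      have := h0.neg
      rwa [neg_zero] at this
    have l2 : Tendsto (fun n : ℕ => (K x n : ℝ) / n) atTop (𝓝 0) := by
      refine tendsto_of_tendsto_of_tendsto_of_le_of_le' hneg h0 ?_ ?_
      · filter_upwards [eventually_ge_atTop 1] with n hn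
        have hnR : (0 : ℝ) < n := by exact_mod_cast hn
        have h1 : (-1 : ℝ) ≤ (K x n : ℝ) := by exact_mod_cast (hb n).1
        calc -(1 / (n : ℝ)) = (-1) / n := by ring
          _ ≤ (K x n : ℝ) / n := (div_le_div_iff_of_pos_right hnR).2 h1
      · filter_upwards [eventually_ge_atTop 1] with n hn
        have hnR : (0 : ℝ) < n := by exact_mod_cast hn
        have h1 : (K x n : ℝ) ≤ 1 := by
          have := (hb n).2
          have : (K x n : ℝ) ≤ 0 := by exact_mod_cast this
          linarith
        exact (div_le_div_iff_of_pos_right hnR).2 h1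
    exact tendsto_nhds_unique (hT' x) l2
  -- φ is positive on positive elements outside C
  have hφpos : ∀ x : D, 1 < (x : G) → (x : G) ∉ C → 0 < φ x := by
    intro x hx1 hxC
    obtain ⟨N, _, hN2⟩ := arch (x : G) x.2 hx1 hxC z hzD
    have hN0 : N ≠ 0 := by
      rintro rfl
      simp at hN2
      exact absurd hN2 (not_le.2 hz1)
    have hK1 : 1 ≤ K x N := by
      refine hKmax x N 1 ?_
      rw [zpow_one]
      exact hN2
    have hmul : ∀ m : ℕ, (m : ℤ) * K x N ≤ K x (m * N) := by
      intro m
      induction m with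
      | zero => simp [hKzero x]
      | succ m ih =>
        have := hKsup x (m * N) N
        have e : (m + 1) * N = m * N + N := by ring
        rw [e]
        push_cast
        nlinarith [this, ih]
    have hTsub : Tendsto (fun m : ℕ => (K x (m * N) : ℝ) / (m * N : ℕ)) atTop (𝓝 (φ x)) := by
      refine (hT' x).comp ?_
      refine tendsto_atTop_mono (fun m => Nat.le_mul_of_pos_right m (Nat.pos_of_ne_zero hN0))
        tendsto_id
    have hlb : ∀ᶠ m : ℕ in atTop, 1 / (N : ℝ) ≤ (K x (m * N) : ℝ) / (m * N : ℕ) := by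
      filter_upwards [eventually_ge_atTop 1] with m hm
      have hmR : (0 : ℝ) < m := by exact_mod_cast hm
      have hNR : (0 : ℝ) < N := by
        exact_mod_cast Nat.pos_of_ne_zero hN0
      have h1 : (m : ℝ) ≤ (K x (m * N) : ℝ) := by
        have h2 : (m : ℤ) * 1 ≤ (m : ℤ) * K x N :=
          mul_le_mul_of_nonneg_left hK1 (by positivity)
        have h3 : (m : ℤ) ≤ K x (m * N) := by
          have := hmul m
          omega
        exact_mod_cast h3
      rw [div_le_div_iff₀ hNR (by positivity)]
      push_cast
      nlinarith
    have := ge_of_tendsto hTsub hlb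
    have hNR : (0 : ℝ) < N := by exact_mod_cast Nat.pos_of_ne_zero hN0
    have : (0 : ℝ) < 1 / N := by positivity
    linarith [ge_of_tendsto hTsub hlb]
  -- conclusion
  refine ⟨φ, hφadd, ?_, hφpos⟩
  intro x
  constructor
  · intro hx0
    by_contra hxC
    have hxne : (x : G) ≠ 1 := fun h => hxC (h ▸ C.one_mem)
    rcases lt_or_gt_of_ne hxne with h | h
    · have hx1 : 1 < ((x⁻¹ : D) : G) := by
        simp only [Subgroup.coe_inv]
        exact Left.one_lt_inv_iff.2 h
      have hxIC : ((x⁻¹ : D) : G) ∉ C := by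
        simp only [Subgroup.coe_inv]
        exact fun hc => hxC (by simpa using inv_mem hc)
      have hpos := hφpos x⁻¹ hx1 hxIC
      have h1 : φ (x * x⁻¹) = φ x + φ x⁻¹ := hφadd x x⁻¹
      have h2 : φ (1 : D) = 0 := hφC 1 (by simpa using C.one_mem)
      rw [mul_inv_cancel] at h1
      rw [h2, hx0] at h1
      linarith
    · exact absurd hx0 (ne_of_gt (hφpos x h hxC))
  · exact hφC x

end ConradAux

set_option maxHeartbeats 2000000 in
/-- (Conrad) For every convex jump `C < D` in a bi-ordered group there is a homomorphism
`φ : D → (ℝ, +)` with kernel `C` which is positive on the positive elements of `D \\ C`. -/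
theorem conrad_homomorphism_exists {G : Type*} [Group G]
    (r : G → G → Prop) (hr : IsBiOrder r)
    (C D : Subgroup G) (hCD : IsConvexJump r C D) :
    ∃ φ : D → ℝ, (∀ x y : D, φ (x * y) = φ x + φ y) ∧
      (∀ x : D, φ x = 0 ↔ (x : G) ∈ C) ∧
      (∀ x : D, r 1 (x : G) → (x : G) ∉ C → 0 < φ x) := by
  classical
  obtain ⟨hirr, htr, htot, hml, hmr⟩ := hr
  letI : LinearOrder G :=
  { le := fun a b => r a b ∨ a = b
    lt := r
    le_refl := fun a => Or.inr rfl
    le_trans := by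
      rintro a b c (h | rfl) (h' | rfl)
      · exact Or.inl (htr _ _ _ h h')
      · exact Or.inl h
      · exact Or.inl h'
      · exact Or.inr rfl
    le_antisymm := by
      rintro a b (h | rfl) (h' | h')
      · exact absurd (htr _ _ _ h h') (hirr a)
      · exact h'.symm
      · rfl
      · rfl
    le_total := fun a b => by
      rcases eq_or_ne a b with rfl | hne
      · exact Or.inl (Or.inr rfl)
      · rcases htot a b hne with h | h
        · exact Or.inl (Or.inl h)
        · exact Or.inr (Or.inl h)
    lt_iff_le_not_ge := by
      intro a b
      constructor
      · intro h
        refine ⟨Or.inl h, ?_⟩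
        rintro (h' | rfl)
        · exact hirr _ (htr _ _ _ h h')
        · exact hirr _ h
      · rintro ⟨h | rfl, h2⟩
        · exact h
        · exact absurd (Or.inr rfl) h2
    toDecidableLE := fun a b => Classical.propDecidable _ }
  haveI : CovariantClass G G (· * ·) (· < ·) :=
    ⟨fun c a b h => hml a b c h⟩
  haveI : CovariantClass G G (Function.swap (· * ·)) (· < ·) :=
    ⟨fun c a b h => hmr a b c h⟩
  haveI : CovariantClass G G (· * ·) (· ≤ ·) := covariantClass_le_of_lt _ _ _
  haveI : CovariantClass G G (Function.swap (· * ·)) (· ≤ ·) := covariantClass_le_of_lt _ _ _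
  obtain ⟨hCc, hDc, hltCD, hjmp⟩ := hCD
  have hC : ConradCvx C := fun a b g ha hb h1 h2 => hCc a b g ha hb h1 h2
  have hD : ConradCvx D := fun a b g ha hb h1 h2 => hDc a b g ha hb h1 h2
  have hjump : ∀ E : Subgroup G, ConradCvx E → C < E → ¬ E < D :=
    fun E hE => hjmp E (fun a b g ha hb h1 h2 => hE a b g ha hb h1 h2)
  obtain ⟨φ, h1, h2, h3⟩ := conrad_aux C D hC hD hltCD hjump
  exact ⟨φ, h1, h2, fun x hx hxC => h3 x hx hxC⟩
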